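/- arXiv:2012.13888 — 2 statements merged into one kernel-verified Lean document; each statement's English description precedes it below -/
import Mathlib

section
/- Let ρ : ℝ → ℝ be C¹ with ρ⁻ < ρ(x) < ρ⁺ for all x (where 0 < ρ⁻ < ρ⁺) and ρ' > 0, and let u(x) = ū⁻ + ∫_{ρ⁻}^{ρ(x)} √(p'(s))/s ds, with ū⁺ := ū⁻ + ∫_{ρ⁻}^{ρ⁺} √(p'(s))/s ds. Define σ(x) = (ρ(x) − ρ⁻)/(ρ⁺ − ρ⁻) and η(x) = (u(x) − ū⁻)/(ū⁺ − ū⁻). Then there exists a constant C > 0, depending only on γ, ρ⁻, ρ⁺, such that |σ(x) − η(x)| ≤ C (ρ⁺ − ρ⁻) σ(x)(1 − σ(x)) for all x ∈ ℝ. -/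
open intervalIntegral

lemma arith_aux (a b F1 F2 m M : ℝ) (ha : 0 < a) (hb : 0 < b) (hm : 0 < m)
    (h1 : m * a ≤ F1) (h1' : F1 ≤ M * a) (h2 : m * b ≤ F2) (h2' : F2 ≤ M * b) :
    |a / (a + b) - F1 / (F1 + F2)| ≤ (M / m) * ((a / (a + b)) * (b / (a + b))) := by
  have hab : 0 < a + b := by linarith
  have hF1 : 0 < F1 := lt_of_lt_of_le (by positivity) h1
  have hF2 : 0 < F2 := lt_of_lt_of_le (by positivity) h2
  have hF : 0 < F1 + F2 := by linarith
  have hMm : m ≤ M := by nlinarith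
  have key : a / (a + b) - F1 / (F1 + F2) = (a * F2 - b * F1) / ((a + b) * (F1 + F2)) := by
    field_simp
    ring
  rw [key, abs_div, abs_of_pos (mul_pos hab hF)]
  have hnum : |a * F2 - b * F1| ≤ M * (a * b) := by
    rw [abs_le]
    constructor <;> nlinarith [mul_le_mul_of_nonneg_left h2' ha.le,
      mul_le_mul_of_nonneg_left h1' hb.le, mul_le_mul_of_nonneg_left h1 hb.le,
      mul_le_mul_of_nonneg_left h2 ha.le]
  have hden : m * ((a + b) * (a + b)) ≤ (a + b) * (F1 + F2) := by nlinarith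
  calc |a * F2 - b * F1| / ((a + b) * (F1 + F2))
      ≤ (M * (a * b)) / (m * ((a + b) * (a + b))) := by
        apply div_le_div₀ (mul_nonneg (hm.le.trans hMm) (by positivity)) hnum (by positivity) hden
    _ = (M / m) * ((a / (a + b)) * (b / (a + b))) := by
        first
        | (field_simp; ring)
        | field_simp

/-- Along a monotone density profile `ρ(x) ∈ (ρ⁻, ρ⁺)` with
`u(x) = ū⁻ + ∫_{ρ⁻}^{ρ(x)} √(p'(s))/s ds`, `p(s) = s^γ`, the normalized profiles
`σ = (ρ−ρ⁻)/(ρ⁺−ρ⁻)` and `η = (u−ū⁻)/(ū⁺−ū⁻)` satisfy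
`|σ − η| ≤ C (ρ⁺−ρ⁻) σ(1−σ)`. -/
theorem sigma_eta_difference_bound
    (γ : ℝ) (hγ : 1 ≤ γ) (ρm ρp um : ℝ) (hρm : 0 < ρm) (hρ : ρm < ρp)
    (ρ : ℝ → ℝ) (hρC1 : ContDiff ℝ 1 ρ)
    (hrange : ∀ x, ρ x ∈ Set.Ioo ρm ρp) (hmono : ∀ x, 0 < deriv ρ x)
    (u : ℝ → ℝ)
    (hu : ∀ x, u x = um + ∫ s in ρm..(ρ x), Real.sqrt (γ * s ^ (γ - 1)) / s)
    (up : ℝ)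
    (hup : up = um + ∫ s in ρm..ρp, Real.sqrt (γ * s ^ (γ - 1)) / s)
    (σ η : ℝ → ℝ)
    (hσ : ∀ x, σ x = (ρ x - ρm) / (ρp - ρm))
    (hη : ∀ x, η x = (u x - um) / (up - um)) :
    ∃ C > 0, ∀ x : ℝ, |σ x - η x| ≤ C * (ρp - ρm) * (σ x * (1 - σ x)) := by
  set g : ℝ → ℝ := fun s => Real.sqrt (γ * s ^ (γ - 1)) / s with hgdef
  have hsub : (0:ℝ) ≤ γ - 1 := by linarith
  have hgcont : ContinuousOn g (Set.Icc ρm ρp) := by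
    apply ContinuousOn.div
    · apply ContinuousOn.sqrt
      apply ContinuousOn.mul continuousOn_const
      intro s hs
      exact (Real.continuousAt_rpow_const s (γ - 1) (Or.inr hsub)).continuousWithinAt
    · exact continuousOn_id
    · intro s hs
      exact ne_of_gt (lt_of_lt_of_le hρm hs.1)
  have hgpos : ∀ s ∈ Set.Icc ρm ρp, 0 < g s := by
    intro s hs
    have hs0 : 0 < s := lt_of_lt_of_le hρm hs.1
    have h1 : 0 < γ * s ^ (γ - 1) :=
      mul_pos (by linarith) (Real.rpow_pos_of_pos hs0 _)
    exact div_pos (Real.sqrt_pos.mpr h1) hs0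
  have hne : (Set.Icc ρm ρp).Nonempty := Set.nonempty_Icc.mpr hρ.le
  obtain ⟨sm, hsmI, hmin⟩ := isCompact_Icc.exists_isMinOn hne hgcont
  obtain ⟨sM, hsMI, hmax⟩ := isCompact_Icc.exists_isMaxOn hne hgcont
  set m := g sm with hmdef
  set M := g sM with hMdef
  have hm : 0 < m := hgpos sm hsmI
  have hM : 0 < M := hgpos sM hsMI
  have hρρ : 0 < ρp - ρm := sub_pos.mpr hρ
  refine ⟨M / m / (ρp - ρm), by positivity, fun x => ?_⟩
  obtain ⟨hr1, hr2⟩ := hrange x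
  set r := ρ x with hrdef
  set a := r - ρm with hadef
  set b := ρp - r with hbdef
  have ha : 0 < a := sub_pos.mpr hr1
  have hb : 0 < b := sub_pos.mpr hr2
  have habs : a + b = ρp - ρm := by ring
  have hint1 : IntervalIntegrable g MeasureTheory.volume ρm r := by
    apply ContinuousOn.intervalIntegrable
    rw [Set.uIcc_of_le hr1.le]
    exact hgcont.mono (Set.Icc_subset_Icc le_rfl hr2.le)
  have hint2 : IntervalIntegrable g MeasureTheory.volume r ρp := by
    apply ContinuousOn.intervalIntegrable
    rw [Set.uIcc_of_le hr2.le]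
    exact hgcont.mono (Set.Icc_subset_Icc hr1.le le_rfl)
  set F1 : ℝ := ∫ s in ρm..r, g s with hF1def
  set F2 : ℝ := ∫ s in r..ρp, g s with hF2def
  have hsub1 : Set.Icc ρm r ⊆ Set.Icc ρm ρp := Set.Icc_subset_Icc le_rfl hr2.le
  have hsub2 : Set.Icc r ρp ⊆ Set.Icc ρm ρp := Set.Icc_subset_Icc hr1.le le_rfl
  have h1 : m * a ≤ F1 := by
    have := intervalIntegral.integral_mono_on hr1.le (_root_.intervalIntegrable_const (c := m))
      hint1 (fun s hs => hmin (hsub1 hs))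
    rw [intervalIntegral.integral_const, smul_eq_mul] at this
    calc m * a = (r - ρm) * m := by rw [hadef]; ring
      _ ≤ ∫ s in ρm..r, g s := this
      _ = F1 := hF1def.symm
  have h1' : F1 ≤ M * a := by
    have := intervalIntegral.integral_mono_on hr1.le hint1
      (_root_.intervalIntegrable_const (c := M)) (fun s hs => hmax (hsub1 hs))
    rw [intervalIntegral.integral_const, smul_eq_mul] at this
    calc F1 = ∫ s in ρm..r, g s := hF1def
      _ ≤ (r - ρm) * M := this
      _ = M * a := by rw [hadef]; ring
  have h2 : m * b ≤ F2 := by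
    have := intervalIntegral.integral_mono_on hr2.le (_root_.intervalIntegrable_const (c := m))
      hint2 (fun s hs => hmin (hsub2 hs))
    rw [intervalIntegral.integral_const, smul_eq_mul] at this
    calc m * b = (ρp - r) * m := by rw [hbdef]; ring
      _ ≤ ∫ s in r..ρp, g s := this
      _ = F2 := hF2def.symm
  have h2' : F2 ≤ M * b := by
    have := intervalIntegral.integral_mono_on hr2.le hint2
      (_root_.intervalIntegrable_const (c := M)) (fun s hs => hmax (hsub2 hs))
    rw [intervalIntegral.integral_const, smul_eq_mul] at this
    calc F2 = ∫ s in r..ρp, g s := hF2def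
      _ ≤ (ρp - r) * M := this
      _ = M * b := by rw [hbdef]; ring
  have hadd : F1 + F2 = ∫ s in ρm..ρp, g s :=
    intervalIntegral.integral_add_adjacent_intervals hint1 hint2
  have hux : u x - um = F1 := by rw [hF1def, hu x]; ring
  have hupm : up - um = F1 + F2 := by rw [hup]; linarith [hadd]
  have hσx : σ x = a / (a + b) := by rw [hσ x, habs]
  have h1σ : 1 - σ x = b / (a + b) := by
    rw [hσx]
    first
    | (field_simp; ring)
    | field_simp
  have hηx : η x = F1 / (F1 + F2) := by rw [hη x, hux, hupm]
  have main := arith_aux a b F1 F2 m M ha hb hm h1 h1' h2 h2'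
  rw [hηx, h1σ, hσx]
  have hC : M / m / (ρp - ρm) * (ρp - ρm) = M / m := div_mul_cancel₀ _ hρρ.ne'
  rw [hC]
  exact main
end

section
/- Let A : [ρ⁻, ρ⁺] → ℝ be C², with A' ≥ c > 0 and |A''| ≤ M on [ρ⁻, ρ⁺]. For r ∈ [ρ⁻, ρ⁺] set σ = (r − ρ⁻)/(ρ⁺ − ρ⁻) and η = (A(r) − A(ρ⁻))/(A(ρ⁺) − A(ρ⁻)). Then |σ − η| ≤ (M/c)(ρ⁺ − ρ⁻) σ(1 − σ). -/
/-- For `A` of class `C²` on `[ρ⁻,ρ⁺]` with `A' ≥ c > 0` and `|A''| ≤ M`, the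
normalized variables `σ = (r−ρ⁻)/(ρ⁺−ρ⁻)`, `η = (A(r)−A(ρ⁻))/(A(ρ⁺)−A(ρ⁻))`
satisfy `|σ − η| ≤ (M/c)(ρ⁺−ρ⁻)σ(1−σ)`. -/
theorem normalized_difference_second_derivative_bound
    (ρm ρp c M : ℝ) (hρm : 0 < ρm) (hρ : ρm < ρp) (hc : 0 < c)
    (A : ℝ → ℝ) (hA : ContDiffOn ℝ 2 A (Set.Icc ρm ρp))
    (hA' : ∀ s ∈ Set.Icc ρm ρp, c ≤ deriv A s)
    (hA'' : ∀ s ∈ Set.Icc ρm ρp, |deriv (deriv A) s| ≤ M)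
    (r : ℝ) (hr : r ∈ Set.Icc ρm ρp)
    (σ η : ℝ) (hσ : σ = (r - ρm) / (ρp - ρm))
    (hη : η = (A r - A ρm) / (A ρp - A ρm)) :
    |σ - η| ≤ (M / c) * (ρp - ρm) * (σ * (1 - σ)) := by
  have hL : (0:ℝ) < ρp - ρm := by linarith
  have hcont : ContinuousOn A (Set.Icc ρm ρp) := hA.continuousOn
  have hdiff : ∀ {a b : ℝ}, ρm ≤ a → b ≤ ρp →
      DifferentiableOn ℝ A (Set.Ioo a b) := by
    intro a b ha hb
    exact (hA.differentiableOn (by norm_num)).mono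
      ((Set.Ioo_subset_Icc_self).trans (Set.Icc_subset_Icc ha hb))
  -- MVT on whole interval gives positivity of A ρp - A ρm
  obtain ⟨ζ, hζ, hζ'⟩ := exists_deriv_eq_slope A hρ
    (hcont.mono (Set.Icc_subset_Icc le_rfl le_rfl)) (hdiff le_rfl le_rfl)
  have hζIcc : ζ ∈ Set.Icc ρm ρp := Set.Ioo_subset_Icc_self hζ
  have hDpos : c * (ρp - ρm) ≤ A ρp - A ρm := by
    have h := hA' ζ hζIcc
    rw [hζ'] at h
    exact (le_div_iff₀ hL).1 h
  have hD : (0:ℝ) < A ρp - A ρm := lt_of_lt_of_le (by positivity) hDpos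
  have hM : 0 ≤ M := le_trans (abs_nonneg _) (hA'' ρm ⟨le_rfl, hρ.le⟩)
  rcases eq_or_lt_of_le hr.1 with h1 | h1
  · -- r = ρm
    subst hσ hη
    rw [← h1]
    simp
  rcases eq_or_lt_of_le hr.2 with h2 | h2
  · -- r = ρp
    subst hσ hη h2
    rw [div_self hL.ne', div_self hD.ne']
    norm_num
  -- main case: ρm < r < ρp
  have hrm : (0:ℝ) < r - ρm := by linarith
  have hpr : (0:ℝ) < ρp - r := by linarith
  obtain ⟨ξ₁, hξ₁, hs₁⟩ := exists_deriv_eq_slope A h1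
    (hcont.mono (Set.Icc_subset_Icc le_rfl h2.le)) (hdiff le_rfl h2.le)
  obtain ⟨ξ₂, hξ₂, hs₂⟩ := exists_deriv_eq_slope A h2
    (hcont.mono (Set.Icc_subset_Icc h1.le le_rfl)) (hdiff h1.le le_rfl)
  have hξ₁₂ : ξ₁ < ξ₂ := lt_trans hξ₁.2 hξ₂.1
  -- deriv A is C¹ on the open interval, apply MVT to it
  have hA2 : ContDiffOn ℝ 1 (deriv A) (Set.Ioo ρm ρp) :=
    (hA.mono Set.Ioo_subset_Icc_self).deriv_of_isOpen isOpen_Ioo (by norm_num)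
  have hsub : Set.Icc ξ₁ ξ₂ ⊆ Set.Ioo ρm ρp := fun x hx =>
    ⟨lt_of_lt_of_le hξ₁.1 hx.1, lt_of_le_of_lt hx.2 hξ₂.2⟩
  obtain ⟨ζ₂, hζ₂, hs₃⟩ := exists_deriv_eq_slope (deriv A) hξ₁₂
    ((hA2.continuousOn).mono hsub)
    ((hA2.differentiableOn (by norm_num)).mono (Set.Ioo_subset_Icc_self.trans hsub))
  have hζ₂Icc : ζ₂ ∈ Set.Icc ρm ρp :=
    Set.Ioo_subset_Icc_self (hsub (Set.Ioo_subset_Icc_self hζ₂))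
  set a1 := deriv A ξ₁ with ha1
  set a2 := deriv A ξ₂ with ha2
  have hB1 : A r - A ρm = a1 * (r - ρm) := by
    rw [hs₁, div_mul_cancel₀ _ hrm.ne']
  have hB2 : A ρp - A r = a2 * (ρp - r) := by
    rw [hs₂, div_mul_cancel₀ _ hpr.ne']
  have hξd : (0:ℝ) < ξ₂ - ξ₁ := by linarith
  have hda : |a2 - a1| ≤ M * (ρp - ρm) := by
    have heq : a2 - a1 = deriv (deriv A) ζ₂ * (ξ₂ - ξ₁) := by
      rw [hs₃, div_mul_cancel₀ _ hξd.ne']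
    rw [heq, abs_mul, abs_of_pos hξd]
    have hb := hA'' ζ₂ hζ₂Icc
    have hle : ξ₂ - ξ₁ ≤ ρp - ρm := by
      have := hξ₁.1; have := hξ₂.2; linarith
    calc |deriv (deriv A) ζ₂| * (ξ₂ - ξ₁) ≤ M * (ξ₂ - ξ₁) :=
          mul_le_mul_of_nonneg_right hb hξd.le
      _ ≤ M * (ρp - ρm) := mul_le_mul_of_nonneg_left hle hM
  -- key algebraic identity
  have hnum : (r - ρm) * (A ρp - A ρm) - (ρp - ρm) * (A r - A ρm)
      = (r - ρm) * (ρp - r) * (a2 - a1) := by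
    have hDeq : A ρp - A ρm = a1 * (r - ρm) + a2 * (ρp - r) := by linarith
    rw [hDeq, hB1]; ring
  have hkey : σ - η = (r - ρm) * (ρp - r) * (a2 - a1)
      / ((ρp - ρm) * (A ρp - A ρm)) := by
    rw [hσ, hη, div_sub_div _ _ hL.ne' hD.ne', hnum]
  have hRHS : (M / c) * (ρp - ρm) * (σ * (1 - σ))
      = M * ((r - ρm) * (ρp - r)) / (c * (ρp - ρm)) := by
    rw [hσ]; field_simp; ring
  rw [hkey, hRHS, abs_div, abs_of_pos (mul_pos hL hD), abs_mul,
    abs_of_pos (mul_pos hrm hpr)]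
  rw [div_le_div_iff₀ (mul_pos hL hD) (mul_pos hc hL)]
  have e1 : (r - ρm) * (ρp - r) * |a2 - a1| * (c * (ρp - ρm))
      ≤ (r - ρm) * (ρp - r) * (M * (ρp - ρm)) * (c * (ρp - ρm)) := by
    apply mul_le_mul_of_nonneg_right _ (by positivity)
    exact mul_le_mul_of_nonneg_left hda (by positivity)
  have e2 : M * ((r - ρm) * (ρp - r)) * ((ρp - ρm) * (c * (ρp - ρm)))
      ≤ M * ((r - ρm) * (ρp - r)) * ((ρp - ρm) * (A ρp - A ρm)) := by
    exact mul_le_mul_of_nonneg_left (mul_le_mul_of_nonneg_left hDpos hL.le)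
      (by positivity)
  nlinarith [e1, e2]
end
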